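/- Let W₁ = (V₀ ⊕ V₁) ⊗ S_{23} and W₂ = (V₀ ⊕ V₂) ⊗ T_{13} inside (ℂ²)^{⊗3} ⊗ (ℂ^n)^{⊗3}. Then W₁ + W₂ = V₁ ⊗ S_{23} ⊕ V₀ ⊗ (ℂ^n)^{⊗3} ⊕ V₂ ⊗ T_{13}, and dim(W₁ + W₂) = 7n³ + n² − 2n. -/

import Mathlib

/-- `|abc⟩ = e_a ⊗ e_b ⊗ e_c` in `(ℂ²)^{⊗3}`, in coordinates. -/
noncomputable def ket (v : Fin 3 → Fin 2) : (Fin 3 → Fin 2) → ℂ :=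
  fun w => if w = v then 1 else 0

noncomputable def f₁ : (Fin 3 → Fin 2) → ℂ := ket ![0, 0, 0]
noncomputable def f₂ : (Fin 3 → Fin 2) → ℂ := ket ![1, 1, 1]
noncomputable def f₃ : (Fin 3 → Fin 2) → ℂ :=
  (Real.sqrt 3 : ℂ)⁻¹ • (ket ![0, 0, 1] + ket ![1, 0, 0] + ket ![0, 1, 0])
noncomputable def f₄ : (Fin 3 → Fin 2) → ℂ :=
  (Real.sqrt 3 : ℂ)⁻¹ • (ket ![1, 1, 0] + ket ![0, 1, 1] + ket ![1, 0, 1])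
noncomputable def f₅ : (Fin 3 → Fin 2) → ℂ :=
  (Real.sqrt 6 : ℂ)⁻¹ • (ket ![0, 1, 0] + ket ![0, 0, 1] - (2 : ℂ) • ket ![1, 0, 0])
noncomputable def f₆ : (Fin 3 → Fin 2) → ℂ :=
  (Real.sqrt 6 : ℂ)⁻¹ • (ket ![1, 0, 1] + ket ![1, 1, 0] - (2 : ℂ) • ket ![0, 1, 1])
noncomputable def f₇ : (Fin 3 → Fin 2) → ℂ :=
  (Real.sqrt 6 : ℂ)⁻¹ • (ket ![0, 0, 1] + ket ![1, 0, 0] - (2 : ℂ) • ket ![0, 1, 0])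
noncomputable def f₈ : (Fin 3 → Fin 2) → ℂ :=
  (Real.sqrt 6 : ℂ)⁻¹ • (ket ![1, 1, 0] + ket ![0, 1, 1] - (2 : ℂ) • ket ![1, 0, 1])

/-- The totally symmetric subspace `V₀` of `(ℂ²)^{⊗3}`. -/
noncomputable def V₀ : Submodule ℂ ((Fin 3 → Fin 2) → ℂ) :=
  Submodule.span ℂ {f₁, f₂, f₃, f₄}

noncomputable def V₁ : Submodule ℂ ((Fin 3 → Fin 2) → ℂ) :=
  Submodule.span ℂ {f₅, f₆}

noncomputable def V₂ : Submodule ℂ ((Fin 3 → Fin 2) → ℂ) :=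
  Submodule.span ℂ {f₇, f₈}

/-- `S_{23} ⊂ (ℂ^n)^{⊗3}`: tensors symmetric in the last two factors. -/
noncomputable def S23 (n : ℕ) : Submodule ℂ ((Fin 3 → Fin n) → ℂ) where
  carrier := {Ψ | ∀ v : Fin 3 → Fin n, Ψ (v ∘ (Equiv.swap (1 : Fin 3) 2)) = Ψ v}
  add_mem' := by intro a b ha hb v; simp [ha v, hb v]
  zero_mem' := by intro v; rfl
  smul_mem' := by intro c Ψ hΨ v; simp [hΨ v]

/-- `T_{13} ⊂ (ℂ^n)^{⊗3}`: tensors with vanishing `1-3` partial trace. -/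
noncomputable def T13 (n : ℕ) : Submodule ℂ ((Fin 3 → Fin n) → ℂ) where
  carrier := {Ψ | ∀ j : Fin n, (∑ i : Fin n, Ψ ![i, j, i]) = 0}
  add_mem' := by
    intro a b ha hb j
    simpa [Finset.sum_add_distrib] using by rw [ha j, hb j]; ring
  zero_mem' := by intro j; simp
  smul_mem' := by intro c Ψ hΨ j; simp [← Finset.mul_sum, hΨ j]

/-- The "tensor product" of a subspace of `(ℂ²)^{⊗3}` with a subspace of
`(ℂ^n)^{⊗3}` inside `(ℂ²)^{⊗3} ⊗ (ℂ^n)^{⊗3}`, in coordinates. -/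
noncomputable def tensorSub (n : ℕ) (P : Submodule ℂ ((Fin 3 → Fin 2) → ℂ))
    (Q : Submodule ℂ ((Fin 3 → Fin n) → ℂ)) :
    Submodule ℂ ((Fin 3 → Fin 2) × (Fin 3 → Fin n) → ℂ) :=
  Submodule.span ℂ
    {f | ∃ p ∈ P, ∃ q ∈ Q, f = fun x => p x.1 * q x.2}


open TensorProduct

set_option linter.unusedSectionVars false
set_option synthInstance.maxHeartbeats 1000000
set_option maxHeartbeats 1000000

section Generic

variable {α β : Type*} [Fintype α] [Fintype β] [DecidableEq α] [DecidableEq β]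

noncomputable def tmulEquiv' (α β : Type*) [Fintype α] [Fintype β] [DecidableEq α] [DecidableEq β] :
    ((α → ℂ) ⊗[ℂ] (β → ℂ)) ≃ₗ[ℂ] (α × β → ℂ) :=
  (TensorProduct.congr (Finsupp.linearEquivFunOnFinite ℂ ℂ α).symm
      (Finsupp.linearEquivFunOnFinite ℂ ℂ β).symm).trans
    ((finsuppTensorFinsupp' ℂ α β).trans (Finsupp.linearEquivFunOnFinite ℂ ℂ (α × β)))

theorem tmulEquiv'_tmul (p : α → ℂ) (q : β → ℂ) :
    tmulEquiv' α β (p ⊗ₜ q) = fun x => p x.1 * q x.2 := by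
  ext x
  obtain ⟨a, b⟩ := x
  simp only [tmulEquiv', LinearEquiv.trans_apply, TensorProduct.congr_tmul,
    Finsupp.linearEquivFunOnFinite_apply, finsuppTensorFinsupp'_apply_apply]
  simp [Finsupp.linearEquivFunOnFinite]

noncomputable def prodSub (P : Submodule ℂ (α → ℂ)) (Q : Submodule ℂ (β → ℂ)) :
    Submodule ℂ (α × β → ℂ) :=
  Submodule.span ℂ {f | ∃ p ∈ P, ∃ q ∈ Q, f = fun x => p x.1 * q x.2}

theorem prodSub_mono {P P' : Submodule ℂ (α → ℂ)} {Q Q' : Submodule ℂ (β → ℂ)}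
    (hP : P ≤ P') (hQ : Q ≤ Q') : prodSub P Q ≤ prodSub P' Q' := by
  apply Submodule.span_mono
  rintro f ⟨p, hp, q, hq, rfl⟩
  exact ⟨p, hP hp, q, hQ hq, rfl⟩

theorem mem_prodSub {P : Submodule ℂ (α → ℂ)} {Q : Submodule ℂ (β → ℂ)}
    {p : α → ℂ} {q : β → ℂ} (hp : p ∈ P) (hq : q ∈ Q) :
    (fun x : α × β => p x.1 * q x.2) ∈ prodSub P Q :=
  Submodule.subset_span ⟨p, hp, q, hq, rfl⟩

theorem prodSub_sup_left {P P' : Submodule ℂ (α → ℂ)} {Q : Submodule ℂ (β → ℂ)} :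
    prodSub (P ⊔ P') Q = prodSub P Q ⊔ prodSub P' Q := by
  apply le_antisymm
  · apply Submodule.span_le.2
    rintro f ⟨p, hp, q, hq, rfl⟩
    obtain ⟨p₁, hp₁, p₂, hp₂, rfl⟩ := Submodule.mem_sup.1 hp
    have : (fun x : α × β => (p₁ + p₂) x.1 * q x.2) =
        (fun x : α × β => p₁ x.1 * q x.2) + fun x : α × β => p₂ x.1 * q x.2 := by
      funext x; simp [add_mul]
    rw [this]
    exact Submodule.add_mem _ (Submodule.mem_sup_left (mem_prodSub hp₁ hq))
      (Submodule.mem_sup_right (mem_prodSub hp₂ hq))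
  · exact sup_le (prodSub_mono le_sup_left le_rfl) (prodSub_mono le_sup_right le_rfl)

theorem prodSub_sup_right {P : Submodule ℂ (α → ℂ)} {Q Q' : Submodule ℂ (β → ℂ)} :
    prodSub P (Q ⊔ Q') = prodSub P Q ⊔ prodSub P Q' := by
  apply le_antisymm
  · apply Submodule.span_le.2
    rintro f ⟨p, hp, q, hq, rfl⟩
    obtain ⟨q₁, hq₁, q₂, hq₂, rfl⟩ := Submodule.mem_sup.1 hq
    have : (fun x : α × β => p x.1 * (q₁ + q₂) x.2) =
        (fun x : α × β => p x.1 * q₁ x.2) + fun x : α × β => p x.1 * q₂ x.2 := by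
      funext x; simp [mul_add]
    rw [this]
    exact Submodule.add_mem _ (Submodule.mem_sup_left (mem_prodSub hp hq₁))
      (Submodule.mem_sup_right (mem_prodSub hp hq₂))
  · exact sup_le (prodSub_mono le_rfl le_sup_left) (prodSub_mono le_rfl le_sup_right)

theorem prodSub_eq_map (P : Submodule ℂ (α → ℂ)) (Q : Submodule ℂ (β → ℂ)) :
    prodSub P Q = Submodule.map (tmulEquiv' α β : ((α → ℂ) ⊗[ℂ] (β → ℂ)) →ₗ[ℂ] (α × β → ℂ))
      (LinearMap.range (TensorProduct.map P.subtype Q.subtype)) := by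
  rw [TensorProduct.range_map_eq_span_tmul, Submodule.map_span]
  have hset : {f : α × β → ℂ | ∃ p ∈ P, ∃ q ∈ Q, f = fun x => p x.1 * q x.2} =
      (tmulEquiv' α β : ((α → ℂ) ⊗[ℂ] (β → ℂ)) →ₗ[ℂ] (α × β → ℂ)) ''
        {t | ∃ m n, P.subtype m ⊗ₜ[ℂ] Q.subtype n = t} := by
    ext f
    constructor
    · rintro ⟨p, hp, q, hq, rfl⟩
      exact ⟨(⟨p, hp⟩ : P) ⊗ₜ (⟨q, hq⟩ : Q), ⟨⟨p, hp⟩, ⟨q, hq⟩, rfl⟩, tmulEquiv'_tmul p q⟩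
    · rintro ⟨t, ⟨p, q, rfl⟩, rfl⟩
      exact ⟨p, p.2, q, q.2, (tmulEquiv'_tmul (p : α → ℂ) (q : β → ℂ))⟩
  unfold prodSub
  rw [hset]

theorem finrank_prodSub (P : Submodule ℂ (α → ℂ)) (Q : Submodule ℂ (β → ℂ)) :
    Module.finrank ℂ (prodSub P Q) = Module.finrank ℂ P * Module.finrank ℂ Q := by
  rw [prodSub_eq_map, LinearEquiv.finrank_map_eq]
  have hinj : Function.Injective (TensorProduct.map P.subtype Q.subtype) := by
    rw [← LinearMap.rTensor_comp_lTensor]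
    exact (Module.Flat.rTensor_preserves_injective_linearMap P.subtype
        P.injective_subtype).comp
      (Module.Flat.lTensor_preserves_injective_linearMap Q.subtype Q.injective_subtype)
  rw [LinearMap.finrank_range_of_inj hinj, Module.finrank_tensorProduct]

noncomputable def applyLeft (π : (α → ℂ) →ₗ[ℂ] (α → ℂ)) :
    (α × β → ℂ) →ₗ[ℂ] (α × β → ℂ) where
  toFun F := fun x => π (fun a => F (a, x.2)) x.1
  map_add' F G := by
    funext x
    show π (fun a => (F + G) (a, x.2)) x.1 = _
    have h : (fun a => (F + G) (a, x.2)) = (fun a => F (a, x.2)) + fun a => G (a, x.2) := rfl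
    rw [h, map_add]; rfl
  map_smul' c F := by
    funext x
    show π (fun a => (c • F) (a, x.2)) x.1 = _
    have h : (fun a => (c • F) (a, x.2)) = c • fun a => F (a, x.2) := rfl
    rw [h, map_smul]; rfl

theorem applyLeft_prod (π : (α → ℂ) →ₗ[ℂ] (α → ℂ)) (p : α → ℂ) (q : β → ℂ) :
    applyLeft π (fun x => p x.1 * q x.2) = fun x : α × β => π p x.1 * q x.2 := by
  funext x
  have h : (fun a => p a * q x.2) = q x.2 • p := by funext a; simp [mul_comm]
  simp [applyLeft, h, mul_comm]

theorem applyLeft_eq_self {π : (α → ℂ) →ₗ[ℂ] (α → ℂ)} {P : Submodule ℂ (α → ℂ)}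
    {Q : Submodule ℂ (β → ℂ)} (hπ : ∀ p ∈ P, π p = p) {F : α × β → ℂ}
    (hF : F ∈ prodSub P Q) : applyLeft π F = F := by
  induction hF using Submodule.span_induction with
  | mem f hf =>
    obtain ⟨p, hp, q, hq, rfl⟩ := hf
    rw [applyLeft_prod, hπ p hp]
  | zero => exact map_zero _
  | add x y _ _ hx hy => rw [map_add, hx, hy]
  | smul c x _ hx => rw [map_smul, hx]

theorem applyLeft_eq_zero {π : (α → ℂ) →ₗ[ℂ] (α → ℂ)} {P : Submodule ℂ (α → ℂ)}
    {Q : Submodule ℂ (β → ℂ)} (hπ : ∀ p ∈ P, π p = 0) {F : α × β → ℂ}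
    (hF : F ∈ prodSub P Q) : applyLeft π F = 0 := by
  induction hF using Submodule.span_induction with
  | mem f hf =>
    obtain ⟨p, hp, q, hq, rfl⟩ := hf
    rw [applyLeft_prod, hπ p hp]
    funext x; simp
  | zero => exact map_zero _
  | add x y _ _ hx hy => rw [map_add, hx, hy, add_zero]
  | smul c x _ hx => rw [map_smul, hx, smul_zero]


theorem sup_rearrange {L : Type*} [Lattice L] (a b c d : L) :
    (a ⊔ b) ⊔ (c ⊔ d) = b ⊔ (a ⊔ c) ⊔ d := by
  apply le_antisymm
  · refine sup_le (sup_le ?_ ?_) (sup_le ?_ ?_)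
    · exact le_sup_of_le_left (le_sup_of_le_right le_sup_left)
    · exact le_sup_of_le_left le_sup_left
    · exact le_sup_of_le_left (le_sup_of_le_right le_sup_right)
    · exact le_sup_right
  · refine sup_le (sup_le ?_ ?_) ?_
    · exact le_sup_of_le_left le_sup_right
    · refine sup_le ?_ ?_
      · exact le_sup_of_le_left le_sup_left
      · exact le_sup_of_le_right le_sup_left
    · exact le_sup_of_le_right le_sup_right

end Generic

-- basic scalar facts
theorem s6_ne : (Real.sqrt 6 : ℂ) ≠ 0 := by
  simp only [ne_eq, Complex.ofReal_eq_zero]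
  positivity

theorem s3_ne : (Real.sqrt 3 : ℂ) ≠ 0 := by
  simp only [ne_eq, Complex.ofReal_eq_zero]
  positivity

/-- projection onto V₁ along V₀ ⊔ V₂ (restricted behaviour). -/
noncomputable def proj1 : ((Fin 3 → Fin 2) → ℂ) →ₗ[ℂ] ((Fin 3 → Fin 2) → ℂ) where
  toFun F := ((Real.sqrt 6 : ℂ) / 3 * (F ![0,0,1] - F ![1,0,0])) • f₅ +
    ((Real.sqrt 6 : ℂ) / 3 * (F ![1,1,0] - F ![0,1,1])) • f₆
  map_add' F G := by funext w; simp; ring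
  map_smul' c F := by funext w; simp; ring

noncomputable def proj2 : ((Fin 3 → Fin 2) → ℂ) →ₗ[ℂ] ((Fin 3 → Fin 2) → ℂ) where
  toFun F := ((Real.sqrt 6 : ℂ) / 3 * (F ![0,0,1] - F ![0,1,0])) • f₇ +
    ((Real.sqrt 6 : ℂ) / 3 * (F ![1,1,0] - F ![1,0,1])) • f₈
  map_add' F G := by funext w; simp; ring
  map_smul' c F := by funext w; simp; ring

theorem proj1_f₅ : proj1 f₅ = f₅ := by
  show (_ • f₅ + _ • f₆ : _) = f₅
  simp (config := { decide := true }) [f₅, f₆, ket]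
  funext w
  simp
  field_simp
  ring

theorem proj1_f₆ : proj1 f₆ = f₆ := by
  show (_ • f₅ + _ • f₆ : _) = f₆
  simp (config := { decide := true }) [f₅, f₆, ket]
  funext w
  simp
  field_simp
  ring

theorem proj1_f₁ : proj1 f₁ = 0 := by
  show (_ • f₅ + _ • f₆ : _) = 0
  simp (config := { decide := true }) [f₁, ket]

theorem proj1_f₂ : proj1 f₂ = 0 := by
  show (_ • f₅ + _ • f₆ : _) = 0
  simp (config := { decide := true }) [f₂, ket]

theorem proj1_f₃ : proj1 f₃ = 0 := by
  show (_ • f₅ + _ • f₆ : _) = 0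
  simp (config := { decide := true }) [f₃, ket]

theorem proj1_f₄ : proj1 f₄ = 0 := by
  show (_ • f₅ + _ • f₆ : _) = 0
  simp (config := { decide := true }) [f₄, ket]

theorem proj1_f₇ : proj1 f₇ = 0 := by
  show (_ • f₅ + _ • f₆ : _) = 0
  simp (config := { decide := true }) [f₇, ket]

theorem proj1_f₈ : proj1 f₈ = 0 := by
  show (_ • f₅ + _ • f₆ : _) = 0
  simp (config := { decide := true }) [f₈, ket]

theorem proj2_f₇ : proj2 f₇ = f₇ := by
  show (_ • f₇ + _ • f₈ : _) = f₇
  simp (config := { decide := true }) [f₇, f₈, ket]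
  funext w
  simp
  field_simp
  ring

theorem proj2_f₈ : proj2 f₈ = f₈ := by
  show (_ • f₇ + _ • f₈ : _) = f₈
  simp (config := { decide := true }) [f₇, f₈, ket]
  funext w
  simp
  field_simp
  ring

theorem proj2_f₁ : proj2 f₁ = 0 := by
  show (_ • f₇ + _ • f₈ : _) = 0
  simp (config := { decide := true }) [f₁, ket]

theorem proj2_f₂ : proj2 f₂ = 0 := by
  show (_ • f₇ + _ • f₈ : _) = 0
  simp (config := { decide := true }) [f₂, ket]

theorem proj2_f₃ : proj2 f₃ = 0 := by
  show (_ • f₇ + _ • f₈ : _) = 0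
  simp (config := { decide := true }) [f₃, ket]

theorem proj2_f₄ : proj2 f₄ = 0 := by
  show (_ • f₇ + _ • f₈ : _) = 0
  simp (config := { decide := true }) [f₄, ket]

theorem proj2_f₅ : proj2 f₅ = 0 := by
  show (_ • f₇ + _ • f₈ : _) = 0
  simp (config := { decide := true }) [f₅, ket]

theorem proj2_f₆ : proj2 f₆ = 0 := by
  show (_ • f₇ + _ • f₈ : _) = 0
  simp (config := { decide := true }) [f₆, ket]

theorem proj1_eq_id_on_V₁ : ∀ p ∈ V₁, proj1 p = p := by
  intro p hp
  have h : V₁ ≤ LinearMap.ker (proj1 - LinearMap.id) := by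
    apply Submodule.span_le.2
    rintro f (rfl | rfl) <;>
      simp [LinearMap.mem_ker, sub_eq_zero, proj1_f₅, proj1_f₆]
  have := h hp
  rw [LinearMap.mem_ker, LinearMap.sub_apply, sub_eq_zero] at this
  simpa using this

theorem proj1_eq_zero_on_V₀V₂ : ∀ p ∈ V₀ ⊔ V₂, proj1 p = 0 := by
  intro p hp
  have h : V₀ ⊔ V₂ ≤ LinearMap.ker proj1 := by
    rw [V₀, V₂, ← Submodule.span_union]
    apply Submodule.span_le.2
    rintro f ((rfl | rfl | rfl | rfl) | (rfl | rfl)) <;>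
      simp [LinearMap.mem_ker, proj1_f₁, proj1_f₂, proj1_f₃, proj1_f₄, proj1_f₇, proj1_f₈]
  exact h hp

theorem proj2_eq_id_on_V₂ : ∀ p ∈ V₂, proj2 p = p := by
  intro p hp
  have h : V₂ ≤ LinearMap.ker (proj2 - LinearMap.id) := by
    apply Submodule.span_le.2
    rintro f (rfl | rfl) <;>
      simp [LinearMap.mem_ker, sub_eq_zero, proj2_f₇, proj2_f₈]
  have := h hp
  rw [LinearMap.mem_ker, LinearMap.sub_apply, sub_eq_zero] at this
  simpa using this

theorem proj2_eq_zero_on_V₀V₁ : ∀ p ∈ V₀ ⊔ V₁, proj2 p = 0 := by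
  intro p hp
  have h : V₀ ⊔ V₁ ≤ LinearMap.ker proj2 := by
    rw [V₀, V₁, ← Submodule.span_union]
    apply Submodule.span_le.2
    rintro f ((rfl | rfl | rfl | rfl) | (rfl | rfl)) <;>
      simp [LinearMap.mem_ker, proj2_f₁, proj2_f₂, proj2_f₃, proj2_f₄, proj2_f₅, proj2_f₆]
  exact h hp

theorem finrank_V₁ : Module.finrank ℂ V₁ = 2 := by
  have hli : LinearIndependent ℂ ![f₅, f₆] := by
    rw [Fintype.linearIndependent_iff]
    intro g hg
    have h1 := congrFun hg ![0,0,1]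
    have h2 := congrFun hg ![1,1,0]
    simp (config := { decide := true }) [Fin.sum_univ_two, f₅, f₆, ket] at h1 h2
    intro i; fin_cases i <;> assumption
  have hset : ({f₅, f₆} : Set ((Fin 3 → Fin 2) → ℂ)) = Set.range ![f₅, f₆] := by
    ext x
    simp [Fin.exists_fin_two]
    tauto
  rw [V₁, hset, finrank_span_eq_card hli]
  simp

theorem finrank_V₂ : Module.finrank ℂ V₂ = 2 := by
  have hli : LinearIndependent ℂ ![f₇, f₈] := by
    rw [Fintype.linearIndependent_iff]
    intro g hg
    have h1 := congrFun hg ![0,0,1]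
    have h2 := congrFun hg ![1,1,0]
    simp (config := { decide := true }) [Fin.sum_univ_two, f₇, f₈, ket] at h1 h2
    intro i; fin_cases i <;> assumption
  have hset : ({f₇, f₈} : Set ((Fin 3 → Fin 2) → ℂ)) = Set.range ![f₇, f₈] := by
    ext x
    simp [Fin.exists_fin_two]
    tauto
  rw [V₂, hset, finrank_span_eq_card hli]
  simp

theorem finrank_V₀ : Module.finrank ℂ V₀ = 4 := by
  have hli : LinearIndependent ℂ ![f₁, f₂, f₃, f₄] := by
    rw [Fintype.linearIndependent_iff]
    intro g hg
    have h1 := congrFun hg ![0,0,0]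
    have h2 := congrFun hg ![1,1,1]
    have h3 := congrFun hg ![0,0,1]
    have h4 := congrFun hg ![1,1,0]
    simp (config := { decide := true }) [Fin.sum_univ_four, f₁, f₂, f₃, f₄, ket] at h1 h2 h3 h4
    intro i; fin_cases i <;> simp_all
  have hset : ({f₁, f₂, f₃, f₄} : Set ((Fin 3 → Fin 2) → ℂ)) = Set.range ![f₁, f₂, f₃, f₄] := by
    ext x
    constructor
    · rintro (rfl | rfl | rfl | rfl)
      exacts [⟨0, rfl⟩, ⟨1, rfl⟩, ⟨2, rfl⟩, ⟨3, rfl⟩]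
    · rintro ⟨i, rfl⟩
      fin_cases i <;> simp
  rw [V₀, hset, finrank_span_eq_card hli]
  simp

theorem mem_S23 {n : ℕ} {Ψ : (Fin 3 → Fin n) → ℂ} :
    Ψ ∈ S23 n ↔ ∀ v : Fin 3 → Fin n, Ψ (v ∘ (Equiv.swap (1 : Fin 3) 2)) = Ψ v := Iff.rfl

theorem mem_T13 {n : ℕ} {Ψ : (Fin 3 → Fin n) → ℂ} :
    Ψ ∈ T13 n ↔ ∀ j : Fin n, (∑ i : Fin n, Ψ ![i, j, i]) = 0 := Iff.rfl

-- swap facts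
theorem swap_comp_apply0 {n : ℕ} (v : Fin 3 → Fin n) :
    (v ∘ (Equiv.swap (1 : Fin 3) 2)) 0 = v 0 := by
  simp [Equiv.swap_apply_of_ne_of_ne]

theorem swap_comp_apply1 {n : ℕ} (v : Fin 3 → Fin n) :
    (v ∘ (Equiv.swap (1 : Fin 3) 2)) 1 = v 2 := by
  simp

theorem swap_comp_apply2 {n : ℕ} (v : Fin 3 → Fin n) :
    (v ∘ (Equiv.swap (1 : Fin 3) 2)) 2 = v 1 := by
  simp

theorem swap_comp_swap {n : ℕ} (v : Fin 3 → Fin n) :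
    (v ∘ (Equiv.swap (1 : Fin 3) 2)) ∘ (Equiv.swap (1 : Fin 3) 2) = v := by
  funext i
  simp [Function.comp]

theorem vec_swap {n : ℕ} (i j k : Fin n) :
    (![i, j, k] ∘ (Equiv.swap (1 : Fin 3) 2)) = ![i, k, j] := by
  funext l
  fin_cases l <;> simp [Equiv.swap_apply_of_ne_of_ne]

theorem eq_of_le_le {n : ℕ} {v : Fin 3 → Fin n} (h1 : v 1 ≤ v 2) (h2 : v 2 ≤ v 1) :
    v ∘ (Equiv.swap (1 : Fin 3) 2) = v := by
  have h : v 1 = v 2 := le_antisymm h1 h2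
  funext i
  fin_cases i <;>
    simp [swap_comp_apply0, Function.comp, Equiv.swap_apply_of_ne_of_ne, h]

theorem S23_sup_T13 (n : ℕ) : S23 n ⊔ T13 n = ⊤ := by
  rw [eq_top_iff]
  rintro Ψ -
  set c : ℂ := ((n : ℂ) + 1)⁻¹ with hc
  have hc0 : ((n : ℂ) + 1) ≠ 0 := Nat.cast_add_one_ne_zero n
  set t : Fin n → ℂ := fun j => ∑ i, (Ψ ![i, j, i] - Ψ ![i, i, j]) / 2 with ht
  set B : (Fin 3 → Fin n) → ℂ := fun v =>
    c * ((if v 0 = v 2 then t (v 1) else 0) + (if v 0 = v 1 then t (v 2) else 0)) with hB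
  set ΨS : (Fin 3 → Fin n) → ℂ :=
    fun v => (Ψ v + Ψ (v ∘ (Equiv.swap (1 : Fin 3) 2))) / 2 + B v with hΨS
  have hS : ΨS ∈ S23 n := by
    intro v
    have h1 : B (v ∘ (Equiv.swap (1 : Fin 3) 2)) = B v := by
      rw [hB]
      simp only [swap_comp_apply0, swap_comp_apply1, swap_comp_apply2]
      ring
    simp only [hΨS, swap_comp_swap, h1]
    ring
  have hT : Ψ - ΨS ∈ T13 n := by
    intro j
    have key : ∀ i : Fin n, (Ψ - ΨS) ![i, j, i] =
        (Ψ ![i, j, i] - Ψ ![i, i, j]) / 2 - c * (t j + if i = j then t i else 0) := by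
      intro i
      have hv : (![i, j, i] ∘ (Equiv.swap (1 : Fin 3) 2)) = ![i, i, j] := vec_swap i j i
      have hB' : B ![i, j, i] = c * (t j + if i = j then t i else 0) := by
        rw [hB]
        simp
        left; congr
      simp only [Pi.sub_apply, hΨS, hv, hB']
      ring
    rw [Finset.sum_congr rfl fun i _ => key i]
    rw [Finset.sum_sub_distrib]
    have h1 : ∑ x : Fin n, (Ψ ![x, j, x] - Ψ ![x, x, j]) / 2 = t j := rfl
    rw [h1, ← Finset.mul_sum, Finset.sum_add_distrib, Finset.sum_const, Finset.sum_ite_eq'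
      Finset.univ j t]
    simp only [Finset.card_univ, Fintype.card_fin, Finset.mem_univ, if_true, nsmul_eq_mul]
    rw [hc]
    field_simp
    ring
  have : Ψ = ΨS + (Ψ - ΨS) := by ring
  rw [this]
  exact Submodule.add_mem _ (Submodule.mem_sup_left hS) (Submodule.mem_sup_right hT)

noncomputable def trMap (n : ℕ) : ((Fin 3 → Fin n) → ℂ) →ₗ[ℂ] (Fin n → ℂ) where
  toFun Ψ := fun j => ∑ i, Ψ ![i, j, i]
  map_add' F G := by funext j; simp [Finset.sum_add_distrib]
  map_smul' c F := by funext j; simp [Finset.mul_sum]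

theorem T13_eq_ker (n : ℕ) : T13 n = LinearMap.ker (trMap n) := by
  ext Ψ
  rw [mem_T13, LinearMap.mem_ker]
  constructor
  · intro h; funext j; exact h j
  · intro h j; exact congrFun h j

theorem trMap_surjective {n : ℕ} (hn : 1 ≤ n) : Function.Surjective (trMap n) := by
  haveI : NeZero n := ⟨by omega⟩
  intro g
  refine ⟨fun v => if v 0 = 0 ∧ v 2 = 0 then g (v 1) else 0, ?_⟩
  funext j
  show (∑ i : Fin n, if (![i, j, i] : Fin 3 → Fin n) 0 = 0 ∧ ![i, j, i] 2 = 0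
    then g (![i, j, i] 1) else 0) = g j
  have : ∀ i : Fin n, (if (![i, j, i] : Fin 3 → Fin n) 0 = 0 ∧ ![i, j, i] 2 = 0
      then g (![i, j, i] 1) else 0) = if i = 0 then g j else 0 := by
    intro i
    by_cases h : i = 0 <;> simp [h]
  rw [Finset.sum_congr rfl fun i _ => this i, Finset.sum_ite_eq' Finset.univ 0 (fun _ => g j)]
  simp

theorem finrank_T13 {n : ℕ} (hn : 1 ≤ n) :
    Module.finrank ℂ (T13 n) = n ^ 3 - n := by
  have h := LinearMap.finrank_range_add_finrank_ker (trMap n)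
  rw [LinearMap.range_eq_top.2 (trMap_surjective hn), finrank_top] at h
  have h1 : Module.finrank ℂ (Fin n → ℂ) = n := by simp
  have h2 : Module.finrank ℂ ((Fin 3 → Fin n) → ℂ) = n ^ 3 := by
    rw [Module.finrank_pi]
    simp [Fintype.card_fun]
  rw [h1, h2] at h
  rw [T13_eq_ker]
  omega

noncomputable def S23equiv (n : ℕ) :
    S23 n ≃ₗ[ℂ] ({v : Fin 3 → Fin n // v 1 ≤ v 2} → ℂ) where
  toFun Ψ := fun s => Ψ.1 s.1
  map_add' _ _ := rfl
  map_smul' _ _ := rfl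
  invFun g := ⟨fun v =>
      if h : v 1 ≤ v 2 then g ⟨v, h⟩
      else g ⟨v ∘ (Equiv.swap (1 : Fin 3) 2), by
        rw [swap_comp_apply1, swap_comp_apply2]; exact le_of_not_ge h⟩, by
    intro v
    by_cases hab : v 1 ≤ v 2
    · by_cases hba : v 2 ≤ v 1
      · rw [eq_of_le_le hab hba]
      · have h1 : ¬ ((v ∘ (Equiv.swap (1 : Fin 3) 2)) 1 ≤ (v ∘ (Equiv.swap (1 : Fin 3) 2)) 2) := by
          rw [swap_comp_apply1, swap_comp_apply2]; exact hba
        beta_reduce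
        rw [dif_neg h1, dif_pos hab]
        congr 1
        exact Subtype.ext (swap_comp_swap v)
    · have hba : v 2 ≤ v 1 := le_of_not_ge hab
      have h1 : (v ∘ (Equiv.swap (1 : Fin 3) 2)) 1 ≤ (v ∘ (Equiv.swap (1 : Fin 3) 2)) 2 := by
        rw [swap_comp_apply1, swap_comp_apply2]; exact hba
      beta_reduce
      rw [dif_pos h1, dif_neg hab]⟩
  left_inv Ψ := by
    apply Subtype.ext
    funext v
    by_cases h : v 1 ≤ v 2
    · simp only [dif_pos h]
    · simp only [dif_neg h]
      exact Ψ.2 v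
  right_inv g := by
    funext s
    simp only [dif_pos s.2]

theorem finrank_S23 (n : ℕ) :
    Module.finrank ℂ (S23 n) = n * (n * (n + 1) / 2) := by
  rw [LinearEquiv.finrank_eq (S23equiv n), Module.finrank_pi]
  have e : {v : Fin 3 → Fin n // v 1 ≤ v 2} ≃
      Fin n × {p : Fin n × Fin n // p.1 ≤ p.2} :=
    { toFun := fun s => (s.1 0, ⟨(s.1 1, s.1 2), s.2⟩)
      invFun := fun x => ⟨![x.1, x.2.1.1, x.2.1.2], by simpa using x.2.2⟩
      left_inv := fun s => by
        apply Subtype.ext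
        funext i
        fin_cases i <;> simp
      right_inv := fun x => by simp }
  rw [Fintype.card_congr e, Fintype.card_prod, Fintype.card_fin,
    Fintype.card_congr (Sym2.sortEquiv (α := Fin n)).symm, Sym2.card]
  rw [Fintype.card_fin, Nat.choose_two_right]
  have h : n + 1 - 1 = n := rfl
  rw [h, Nat.mul_comm (n + 1) n]

/-- `W₁ + W₂ = V₁ ⊗ S_{23} + V₀ ⊗ (ℂ^n)^{⊗3} + V₂ ⊗ T_{13}` and its
dimension is `7n³ + n² − 2n`. -/
theorem W1_plus_W2 (n : ℕ) (hn : 2 ≤ n) :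
    tensorSub n (V₀ ⊔ V₁) (S23 n) ⊔ tensorSub n (V₀ ⊔ V₂) (T13 n) =
      tensorSub n V₁ (S23 n) ⊔ tensorSub n V₀ ⊤ ⊔ tensorSub n V₂ (T13 n) ∧
    Module.finrank ℂ
      ↥(tensorSub n (V₀ ⊔ V₁) (S23 n) ⊔ tensorSub n (V₀ ⊔ V₂) (T13 n)) =
      7 * n ^ 3 + n ^ 2 - 2 * n := by
  classical
  have hts : ∀ (P : Submodule ℂ ((Fin 3 → Fin 2) → ℂ)) (Q : Submodule ℂ ((Fin 3 → Fin n) → ℂ)),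
      tensorSub n P Q = prodSub P Q := fun _ _ => rfl
  have e3 : prodSub V₀ (⊤ : Submodule ℂ ((Fin 3 → Fin n) → ℂ)) =
      prodSub V₀ (S23 n) ⊔ prodSub V₀ (T13 n) := by
    rw [← prodSub_sup_right, S23_sup_T13]
  have part1 : tensorSub n (V₀ ⊔ V₁) (S23 n) ⊔ tensorSub n (V₀ ⊔ V₂) (T13 n) =
      tensorSub n V₁ (S23 n) ⊔ tensorSub n V₀ ⊤ ⊔ tensorSub n V₂ (T13 n) := by
    rw [hts, hts, hts, hts, hts, prodSub_sup_left, prodSub_sup_left, e3]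
    exact sup_rearrange _ _ _ _
  refine ⟨part1, ?_⟩
  rw [part1, hts, hts, hts]
  set A := prodSub V₁ (S23 n) with hA
  set B := prodSub V₀ (⊤ : Submodule ℂ ((Fin 3 → Fin n) → ℂ)) with hB
  set C := prodSub V₂ (T13 n) with hC
  have hAB : A ⊓ B = ⊥ := by
    rw [eq_bot_iff]
    rintro F hF
    obtain ⟨hFA, hFB⟩ := Submodule.mem_inf.1 hF
    have h1 : applyLeft proj1 F = F := applyLeft_eq_self proj1_eq_id_on_V₁ hFA
    have h2 : applyLeft proj1 F = 0 :=
      applyLeft_eq_zero (fun p hp => proj1_eq_zero_on_V₀V₂ p (Submodule.mem_sup_left hp)) hFB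
    rw [Submodule.mem_bot, ← h1, h2]
  have hABC : (A ⊔ B) ⊓ C = ⊥ := by
    rw [eq_bot_iff]
    rintro F hF
    obtain ⟨hFAB, hFC⟩ := Submodule.mem_inf.1 hF
    have hle : A ⊔ B ≤ prodSub (V₀ ⊔ V₁) (⊤ : Submodule ℂ ((Fin 3 → Fin n) → ℂ)) :=
      sup_le (prodSub_mono le_sup_right le_top) (prodSub_mono le_sup_left le_top)
    have h1 : applyLeft proj2 F = F := applyLeft_eq_self proj2_eq_id_on_V₂ hFC
    have h2 : applyLeft proj2 F = 0 :=
      applyLeft_eq_zero proj2_eq_zero_on_V₀V₁ (hle hFAB)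
    rw [Submodule.mem_bot, ← h1, h2]
  have r1 := Submodule.finrank_sup_add_finrank_inf_eq A B
  rw [hAB, finrank_bot, add_zero] at r1
  have r2 := Submodule.finrank_sup_add_finrank_inf_eq (A ⊔ B) C
  rw [hABC, finrank_bot, add_zero] at r2
  have fA : Module.finrank ℂ A = 2 * (n * (n * (n + 1) / 2)) := by
    rw [hA, finrank_prodSub, finrank_V₁, finrank_S23]
  have fB : Module.finrank ℂ B = 4 * n ^ 3 := by
    rw [hB, finrank_prodSub, finrank_V₀, finrank_top]
    congr 1
    rw [Module.finrank_pi]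
    simp [Fintype.card_fun]
  have fC : Module.finrank ℂ C = 2 * (n ^ 3 - n) := by
    rw [hC, finrank_prodSub, finrank_V₂, finrank_T13 (by omega)]
  rw [r2, r1, fA, fB, fC]
  have he : n * (n + 1) / 2 * 2 = n * (n + 1) :=
    Nat.div_mul_cancel (even_iff_two_dvd.mp (Nat.even_mul_succ_self n))
  have h1 : 2 * (n * (n * (n + 1) / 2)) = n ^ 3 + n ^ 2 := by
    rw [show 2 * (n * (n * (n + 1) / 2)) = n * (n * (n + 1) / 2 * 2) by ring, he]
    ring
  have h2 : n ≤ n ^ 3 := Nat.le_self_pow (by norm_num) n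
  rw [h1]
  generalize n ^ 3 = a at h2 ⊢
  generalize n ^ 2 = b
  omega
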